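/- arXiv:1003.0462 — 6 statements merged into one kernel-verified Lean document; each statement's English description precedes it below -/
import Mathlib

section
/- Let c₁, c₂ be positive integers, n a nonzero integer, x, y integers with gcd(x,c₁)=1, gcd(y,c₂)=1 and c₂x + c₁y = n. Let x̄, ȳ be inverses of x mod c₁ and y mod c₂ respectively, and set r₁ = (n·x̄ - c₂)/c₁ and r₂ = (n·ȳ - c₁)/c₂ (both integers). Then r₁·r₂ ≡ 1 (mod n). -/
theorem stmt_2 (c₁ c₂ : ℕ) (hc₁ : 0 < c₁) (hc₂ : 0 < c₂) (n : ℤ) (hn : n ≠ 0)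
    (x y xbar ybar r₁ r₂ : ℤ)
    (hx : IsCoprime x (c₁ : ℤ)) (hy : IsCoprime y (c₂ : ℤ))
    (h : (c₂ : ℤ) * x + (c₁ : ℤ) * y = n)
    (hxbar : x * xbar ≡ 1 [ZMOD (c₁ : ℤ)])
    (hybar : y * ybar ≡ 1 [ZMOD (c₂ : ℤ)])
    (hr₁ : (c₁ : ℤ) * r₁ = n * xbar - c₂)
    (hr₂ : (c₂ : ℤ) * r₂ = n * ybar - c₁) :
    r₁ * r₂ ≡ 1 [ZMOD n] := by
  have hc₁' : (c₁ : ℤ) ≠ 0 := by exact_mod_cast hc₁.ne'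
  have hc₂' : (c₂ : ℤ) ≠ 0 := by exact_mod_cast hc₂.ne'
  obtain ⟨k, hk⟩ : (c₁ : ℤ) ∣ x * xbar - 1 := (Int.modEq_iff_dvd.mp hxbar.symm)
  obtain ⟨m, hm⟩ : (c₂ : ℤ) ∣ y * ybar - 1 := (Int.modEq_iff_dvd.mp hybar.symm)
  have key : r₁ * r₂ - 1 = n * (k * ybar + m * xbar) := by
    have h0 : (c₁ : ℤ) * c₂ * (r₁ * r₂ - 1 - n * (k * ybar + m * xbar)) = 0 := by
      have e1 : ((c₁:ℤ) * r₁) * ((c₂:ℤ) * r₂) = (n * xbar - c₂) * (n * ybar - c₁) := by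
        rw [hr₁, hr₂]
      linear_combination e1 + n * c₂ * ybar * hk + n * c₁ * xbar * hm - n * xbar * ybar * h
    rcases mul_eq_zero.mp h0 with h1 | h2
    · exact absurd h1 (mul_ne_zero hc₁' hc₂')
    · linarith
  have : n ∣ 1 - r₁ * r₂ := ⟨-(k * ybar + m * xbar), by linarith⟩
  exact (Int.modEq_iff_dvd.mpr this)
end

section
/- Let c₁, c₂ be positive integers with d = gcd(c₁,c₂) dividing the nonzero integer n. Suppose (x,y) and (x',y') are two pairs with gcd(x,c₁)=gcd(x',c₁)=1, gcd(y,c₂)=gcd(y',c₂)=1, c₂x + c₁y = n = c₂x' + c₁y', and both pairs give rise to the same residues r₁ mod n (via r₁ = (n·x̄ - c₂)/c₁) and r₂ mod n (via r₂ = (n·ȳ - c₁)/c₂). Then x ≡ x' (mod c₁) and y ≡ y' (mod c₂). -/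
lemma key_aux (c n : ℤ) (hn : n ≠ 0) (x x' xb xb' r r' e : ℤ)
    (hxb : x * xb ≡ 1 [ZMOD c]) (hxb' : x' * xb' ≡ 1 [ZMOD c])
    (hr : c * r = n * xb - e) (hr' : c * r' = n * xb' - e)
    (hs : r ≡ r' [ZMOD n]) : x ≡ x' [ZMOD c] := by
  obtain ⟨k, hk⟩ := hs.dvd
  have h1 : n * (xb' - xb) = n * (c * k) := by linear_combination hr - hr' + c * hk
  have h2 : xb' - xb = c * k := mul_left_cancel₀ hn h1
  have hxb2 : xb ≡ xb' [ZMOD c] := Int.modEq_iff_dvd.mpr ⟨k, h2⟩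
  have step1 : x * (x' * xb') ≡ x [ZMOD c] := by
    calc x * (x' * xb') ≡ x * 1 [ZMOD c] := hxb'.mul_left x
    _ = x := mul_one x
  have step2 : x' * (x * xb) ≡ x' [ZMOD c] := by
    calc x' * (x * xb) ≡ x' * 1 [ZMOD c] := hxb.mul_left x'
    _ = x' := mul_one x'
  have step3 : x * (x' * xb') ≡ x' * (x * xb) [ZMOD c] := by
    have hmm : x * xb' ≡ x * xb [ZMOD c] := hxb2.symm.mul_left x
    calc x * (x' * xb') = x' * (x * xb') := by ring
    _ ≡ x' * (x * xb) [ZMOD c] := hmm.mul_left x'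
  exact step1.symm.trans (step3.trans step2)

theorem stmt_4 (c₁ c₂ : ℕ) (hc₁ : 0 < c₁) (hc₂ : 0 < c₂) (n : ℤ) (hn : n ≠ 0)
    (hd : ((Nat.gcd c₁ c₂ : ℕ) : ℤ) ∣ n)
    (x y x' y' xbar ybar xbar' ybar' r₁ r₂ r₁' r₂' : ℤ)
    (hx : IsCoprime x (c₁ : ℤ)) (hy : IsCoprime y (c₂ : ℤ))
    (hx' : IsCoprime x' (c₁ : ℤ)) (hy' : IsCoprime y' (c₂ : ℤ))
    (h : (c₂ : ℤ) * x + (c₁ : ℤ) * y = n)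
    (h' : (c₂ : ℤ) * x' + (c₁ : ℤ) * y' = n)
    (hxbar : x * xbar ≡ 1 [ZMOD (c₁ : ℤ)])
    (hybar : y * ybar ≡ 1 [ZMOD (c₂ : ℤ)])
    (hxbar' : x' * xbar' ≡ 1 [ZMOD (c₁ : ℤ)])
    (hybar' : y' * ybar' ≡ 1 [ZMOD (c₂ : ℤ)])
    (hr₁ : (c₁ : ℤ) * r₁ = n * xbar - c₂)
    (hr₂ : (c₂ : ℤ) * r₂ = n * ybar - c₁)
    (hr₁' : (c₁ : ℤ) * r₁' = n * xbar' - c₂)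
    (hr₂' : (c₂ : ℤ) * r₂' = n * ybar' - c₁)
    (hsame₁ : r₁ ≡ r₁' [ZMOD n]) (hsame₂ : r₂ ≡ r₂' [ZMOD n]) :
    x ≡ x' [ZMOD (c₁ : ℤ)] ∧ y ≡ y' [ZMOD (c₂ : ℤ)] := by
  exact ⟨key_aux _ n hn x x' xbar xbar' r₁ r₁' c₂ hxbar hxbar' hr₁ hr₁' hsame₁,
         key_aux _ n hn y y' ybar ybar' r₂ r₂' c₁ hybar hybar' hr₂ hr₂' hsame₂⟩
end

section
/- Let c₁, c₂ be positive integers, n a nonzero integer with d = gcd(c₁,c₂) dividing n. Let r be an integer coprime to n such that (c₁/d)·r + (c₂/d) ≡ 0 (mod n/d) and (c₁/d)·r + (c₂/d) ≢ 0 (mod n/d') for every proper divisor d' of d. Then ξ := (c₂ + c₁·r)/n is an integer which is a unit modulo c₁. -/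
theorem stmt_5 (c₁ c₂ : ℕ) (hc₁ : 0 < c₁) (hc₂ : 0 < c₂) (n : ℤ) (hn : n ≠ 0)
    (d : ℕ) (hdef : d = Nat.gcd c₁ c₂) (hd : (d : ℤ) ∣ n)
    (r : ℤ) (hr : IsCoprime r n)
    (h1 : (n / (d : ℤ)) ∣ ((c₁ / d : ℕ) : ℤ) * r + ((c₂ / d : ℕ) : ℤ))
    (h2 : ∀ d' : ℕ, d' ∣ d → d' < d →
      ¬ ((n / (d' : ℤ)) ∣ ((c₁ / d : ℕ) : ℤ) * r + ((c₂ / d : ℕ) : ℤ))) :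
    n ∣ (c₂ : ℤ) + (c₁ : ℤ) * r ∧ IsCoprime (((c₂ : ℤ) + (c₁ : ℤ) * r) / n) (c₁ : ℤ) := by
  have hd0 : 0 < d := by
    subst hdef; exact Nat.gcd_pos_of_pos_left _ hc₁
  set a : ℕ := c₁ / d with ha_def
  set b : ℕ := c₂ / d with hb_def
  have hda : c₁ = d * a := by
    rw [ha_def, Nat.mul_div_cancel' (hdef ▸ Nat.gcd_dvd_left c₁ c₂)]
  have hdb : c₂ = d * b := by
    rw [hb_def, Nat.mul_div_cancel' (hdef ▸ Nat.gcd_dvd_right c₁ c₂)]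
  have hab : Nat.Coprime a b := by
    rw [ha_def, hb_def, hdef]
    exact Nat.coprime_div_gcd_div_gcd (hdef ▸ hd0)
  set m : ℤ := n / (d : ℤ) with hm_def
  have hnm : n = (d : ℤ) * m := (Int.mul_ediv_cancel' hd).symm
  have hm0 : m ≠ 0 := by
    intro h; rw [h, mul_zero] at hnm; exact hn hnm
  obtain ⟨k, hk⟩ := h1
  have hsum : (c₂ : ℤ) + (c₁ : ℤ) * r = n * k := by
    rw [hda, hdb, hnm]
    push_cast
    linear_combination (d : ℤ) * hk
  constructor
  · exact ⟨k, hsum⟩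
  · have hxi : ((c₂ : ℤ) + (c₁ : ℤ) * r) / n = k := by
      rw [hsum, Int.mul_ediv_cancel_left _ hn]
    rw [hxi, Int.isCoprime_iff_gcd_eq_one]
    by_contra hne
    obtain ⟨p, hp, hpd⟩ := Nat.exists_prime_and_dvd hne
    have hpk : (p : ℤ) ∣ k := (Int.natCast_dvd_natCast.mpr hpd).trans (Int.gcd_dvd_left _ _)
    have hpc : p ∣ c₁ := by
      have := (Int.natCast_dvd_natCast.mpr hpd).trans (Int.gcd_dvd_right (a := k) (b := (c₁ : ℤ)))
      exact_mod_cast this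
    by_cases hpdvd : p ∣ d
    · -- use h2 with d' = d / p
      set d' : ℕ := d / p with hd'_def
      have hpd' : d = p * d' := (Nat.mul_div_cancel' hpdvd).symm
      have hd'0 : 0 < d' := Nat.div_pos (Nat.le_of_dvd hd0 hpdvd) hp.pos
      have hlt : d' < d := Nat.div_lt_self hd0 hp.one_lt
      apply h2 d' (Nat.div_dvd_of_dvd hpdvd) hlt
      have hnd' : n / (d' : ℤ) = (p : ℤ) * m := by
        have : n = (d' : ℤ) * ((p : ℤ) * m) := by
          rw [hnm, hpd']; push_cast; ring
        rw [this, Int.mul_ediv_cancel_left _ (by exact_mod_cast hd'0.ne')]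
      rw [hnd', hk]
      obtain ⟨t, ht⟩ := hpk
      exact ⟨t, by rw [ht]; ring⟩
    · -- p ∤ d, so p ∣ a; and p ∣ m*k = a*r + b gives p ∣ b, contradiction
      have hpa : p ∣ a := by
        have : p ∣ d * a := hda ▸ hpc
        exact (hp.dvd_mul.mp this).resolve_left hpdvd
      have hpab : (p : ℤ) ∣ (a : ℤ) * r + (b : ℤ) := by
        rw [hk]; exact Dvd.dvd.mul_left hpk m
      have hpb : (p : ℤ) ∣ (b : ℤ) := by
        have : (p : ℤ) ∣ (a : ℤ) * r := (Int.natCast_dvd_natCast.mpr hpa).mul_right r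
        have := hpab.sub this
        simpa using this
      have hpb' : p ∣ b := by exact_mod_cast hpb
      exact hp.one_lt.ne' (Nat.eq_one_of_dvd_one (hab ▸ Nat.dvd_gcd hpa hpb'))
end

section
/- Let c₁, c₂ be positive integers, n a nonzero integer with d = gcd(c₁,c₂) dividing n. The map sending an equivalence class of pairs (x,y) (with gcd(x,c₁)=1, gcd(y,c₂)=1, c₂x + c₁y = n, modulo x ≡ x' mod c₁ and y ≡ y' mod c₂) to r₁ mod n, where r₁ = (n·x̄ - c₂)/c₁ for x̄ an inverse of x mod c₁, is a bijection onto the set Y(c₁,c₂,n) of classes r ∈ (ℤ/n)^× satisfying (c₁/d)r + (c₂/d) ≡ 0 (mod n/d) and (c₁/d)r + (c₂/d) ≢ 0 (mod n/d') for every proper divisor d' of d. -/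
private lemma aux_prime_not_dvd_one (q : ℕ) (hq : q.Prime) (h : (q : ℤ) ∣ 1) : False := by
  have h1 : q ∣ 1 := by exact_mod_cast h
  have h2 := hq.one_lt
  have h3 := Nat.dvd_one.mp h1
  omega

private lemma aux_coprime (z m : ℤ)
    (h : ∀ q : ℕ, q.Prime → (q : ℤ) ∣ z → (q : ℤ) ∣ m → False) : IsCoprime z m := by
  rw [Int.isCoprime_iff_gcd_eq_one]
  by_contra hg
  obtain ⟨q, hq, hqd⟩ := Nat.exists_prime_and_dvd hg
  exact h q hq ((Int.natCast_dvd_natCast.mpr hqd).trans (Int.gcd_dvd_left z m))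
    ((Int.natCast_dvd_natCast.mpr hqd).trans (Int.gcd_dvd_right z m))

private lemma aux_unique (c₁ c₂ n x xb1 xb2 r1 r2 : ℤ) (hc₁ : c₁ ≠ 0)
    (h1 : x * xb1 ≡ 1 [ZMOD c₁]) (h2 : x * xb2 ≡ 1 [ZMOD c₁])
    (e1 : c₁ * r1 = n * xb1 - c₂) (e2 : c₁ * r2 = n * xb2 - c₂) :
    r1 ≡ r2 [ZMOD n] := by
  have hb : xb1 ≡ xb2 [ZMOD c₁] := by
    calc xb1 = xb1 * 1 := by ring
    _ ≡ xb1 * (x * xb2) [ZMOD c₁] := (Int.ModEq.mul_left xb1 h2).symm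
    _ = xb2 * (x * xb1) := by ring
    _ ≡ xb2 * 1 [ZMOD c₁] := Int.ModEq.mul_left xb2 h1
    _ = xb2 := by ring
  obtain ⟨t, ht⟩ := Int.modEq_iff_dvd.mp hb
  rw [Int.modEq_iff_dvd]
  refine ⟨t, ?_⟩
  have h3 : c₁ * (r2 - r1) = c₁ * (n * t) := by linear_combination e2 - e1 + n * ht
  have := mul_left_cancel₀ hc₁ h3
  linarith
theorem stmt_6 (c₁ c₂ : ℕ) (hc₁ : 0 < c₁) (hc₂ : 0 < c₂) (n : ℤ) (hn : n ≠ 0)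
    (d : ℕ) (hdef : d = Nat.gcd c₁ c₂) (hd : (d : ℤ) ∣ n) :
    ∃ f : {p : ℤ × ℤ // IsCoprime p.1 (c₁ : ℤ) ∧ IsCoprime p.2 (c₂ : ℤ) ∧
            (c₂ : ℤ) * p.1 + (c₁ : ℤ) * p.2 = n} → ZMod n.natAbs,
      (∀ p xbar r₁, p.val.1 * xbar ≡ 1 [ZMOD (c₁ : ℤ)] →
          (c₁ : ℤ) * r₁ = n * xbar - (c₂ : ℤ) → f p = (r₁ : ZMod n.natAbs)) ∧
      (∀ p q, f p = f q ↔
          (p.val.1 ≡ q.val.1 [ZMOD (c₁ : ℤ)] ∧ p.val.2 ≡ q.val.2 [ZMOD (c₂ : ℤ)])) ∧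
      Set.range f = {r : ZMod n.natAbs | ∃ ρ : ℤ, (ρ : ZMod n.natAbs) = r ∧
          IsCoprime ρ n ∧
          (n / (d : ℤ)) ∣ ((c₁ / d : ℕ) : ℤ) * ρ + ((c₂ / d : ℕ) : ℤ) ∧
          ∀ d' : ℕ, d' ∣ d → d' < d →
            ¬ ((n / (d' : ℤ)) ∣ ((c₁ / d : ℕ) : ℤ) * ρ + ((c₂ / d : ℕ) : ℤ))} := by
  classical
  have hdc₁ : d ∣ c₁ := by rw [hdef]; exact Nat.gcd_dvd_left c₁ c₂
  have hdc₂ : d ∣ c₂ := by rw [hdef]; exact Nat.gcd_dvd_right c₁ c₂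
  have hd0 : 0 < d := by rw [hdef]; exact Nat.gcd_pos_of_pos_left c₂ hc₁
  have hdz : (d : ℤ) ≠ 0 := by exact_mod_cast hd0.ne'
  have hc₁z : (c₁ : ℤ) ≠ 0 := by exact_mod_cast hc₁.ne'
  have hc₂z : (c₂ : ℤ) ≠ 0 := by exact_mod_cast hc₂.ne'
  have he₁ : (d : ℤ) * ((c₁ / d : ℕ) : ℤ) = c₁ := by exact_mod_cast Nat.mul_div_cancel' hdc₁
  have he₂ : (d : ℤ) * ((c₂ / d : ℕ) : ℤ) = c₂ := by exact_mod_cast Nat.mul_div_cancel' hdc₂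
  have hnd : (d : ℤ) * (n / d) = n := Int.mul_ediv_cancel' hd
  have hndz : n / (d : ℤ) ≠ 0 := by
    intro h; rw [h, mul_zero] at hnd; exact hn hnd.symm
  have hcast : ∀ z w : ℤ, (z : ZMod n.natAbs) = (w : ZMod n.natAbs) ↔ z ≡ w [ZMOD n] := by
    intro z w
    rw [ZMod.intCast_eq_intCast_iff, Int.natCast_natAbs]
    constructor
    · intro h
      rw [Int.modEq_iff_dvd] at h ⊢
      exact (abs_dvd _ _).mp h
    · intro h
      rw [Int.modEq_iff_dvd] at h ⊢
      exact (abs_dvd _ _).mpr h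
  choose a b hab using fun p : {p : ℤ × ℤ // IsCoprime p.1 (c₁ : ℤ) ∧ IsCoprime p.2 (c₂ : ℤ) ∧
      (c₂ : ℤ) * p.1 + (c₁ : ℤ) * p.2 = n} => p.2.1
  have hinv : ∀ p, p.val.1 * a p ≡ 1 [ZMOD (c₁ : ℤ)] := by
    intro p
    rw [Int.modEq_iff_dvd]
    exact ⟨b p, by linear_combination - hab p⟩
  have hkey : ∀ p, (c₁ : ℤ) * (p.val.2 * a p - b p * c₂) = n * a p - c₂ := by
    intro p
    have hs := p.2.2.2
    linear_combination (a p) * hs - (c₂ : ℤ) * hab p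
  have hspec : ∀ p xbar r₁, p.val.1 * xbar ≡ 1 [ZMOD (c₁ : ℤ)] →
      (c₁ : ℤ) * r₁ = n * xbar - (c₂ : ℤ) →
      ((p.val.2 * a p - b p * c₂ : ℤ) : ZMod n.natAbs) = (r₁ : ZMod n.natAbs) := by
    intro p xbar r₁ h1 h2
    rw [hcast]
    exact aux_unique c₁ c₂ n p.val.1 (a p) xbar _ r₁ hc₁z (hinv p) h1 (hkey p) h2
  -- the equality (c₁/d) ρ_p + (c₂/d) = (n/d) * a p
  have hdiveq : ∀ p, ((c₁ / d : ℕ) : ℤ) * (p.val.2 * a p - b p * c₂) + ((c₂ / d : ℕ) : ℤ)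
      = (n / d) * a p := by
    intro p
    have h3 : (d : ℤ) * (((c₁ / d : ℕ) : ℤ) * (p.val.2 * a p - b p * c₂) + ((c₂ / d : ℕ) : ℤ))
        = (d : ℤ) * ((n / d) * a p) := by
      linear_combination (p.val.2 * a p - b p * (c₂:ℤ)) * he₁ + he₂ - (a p) * hnd + hkey p
    exact mul_left_cancel₀ hdz h3
  refine ⟨fun p => ((p.val.2 * a p - b p * c₂ : ℤ) : ZMod n.natAbs), ?_, ?_, ?_⟩
  · intro p xbar r₁ h1 h2
    exact hspec p xbar r₁ h1 h2
  · intro p q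
    constructor
    · intro h
      have h' : ((p.val.2 * a p - b p * c₂ : ℤ) : ZMod n.natAbs)
          = ((q.val.2 * a q - b q * c₂ : ℤ) : ZMod n.natAbs) := h
      rw [hcast] at h'
      obtain ⟨s, hs⟩ := Int.modEq_iff_dvd.mp h'
      have hA : a q - a p = (c₁ : ℤ) * s := by
        have h3 : n * (a q - a p) = n * ((c₁ : ℤ) * s) := by
          linear_combination hkey p - hkey q + (c₁ : ℤ) * hs
        exact mul_left_cancel₀ hn h3
      have haa : a p ≡ a q [ZMOD (c₁ : ℤ)] := Int.modEq_iff_dvd.mpr ⟨s, hA⟩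
      have hxx : p.val.1 ≡ q.val.1 [ZMOD (c₁ : ℤ)] := by
        calc p.val.1 = p.val.1 * 1 := by ring
        _ ≡ p.val.1 * (q.val.1 * a q) [ZMOD (c₁ : ℤ)] := (Int.ModEq.mul_left _ (hinv q)).symm
        _ = q.val.1 * (p.val.1 * a q) := by ring
        _ ≡ q.val.1 * (p.val.1 * a p) [ZMOD (c₁ : ℤ)] :=
          Int.ModEq.mul_left _ (Int.ModEq.mul_left _ haa.symm)
        _ ≡ q.val.1 * 1 [ZMOD (c₁ : ℤ)] := Int.ModEq.mul_left _ (hinv p)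
        _ = q.val.1 := by ring
      refine ⟨hxx, ?_⟩
      obtain ⟨t, ht⟩ := Int.modEq_iff_dvd.mp hxx
      rw [Int.modEq_iff_dvd]
      refine ⟨-t, ?_⟩
      have hp := p.2.2.2
      have hq := q.2.2.2
      have h3 : (c₁ : ℤ) * (q.val.2 - p.val.2) = (c₁ : ℤ) * ((c₂ : ℤ) * (-t)) := by
        linear_combination hq - hp - (c₂ : ℤ) * ht
      exact mul_left_cancel₀ hc₁z h3
    · rintro ⟨hx, hy⟩
      have h1 : p.val.1 * a q ≡ 1 [ZMOD (c₁ : ℤ)] :=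
        (Int.ModEq.mul_right (a q) hx).trans (hinv q)
      exact hspec p (a q) (q.val.2 * a q - b q * c₂) h1 (hkey q)
  · ext r
    simp only [Set.mem_range, Set.mem_setOf_eq]
    constructor
    · rintro ⟨p, rfl⟩
      refine ⟨p.val.2 * a p - b p * c₂, rfl, ?_, ?_, ?_⟩
      · -- coprimality of ρ_p with n
        apply aux_coprime
        intro q hq hq1 hq2
        have hpz : Prime (q : ℤ) := Nat.prime_iff_prime_int.mp hq
        have hqc₂ : (q : ℤ) ∣ c₂ := by
          have h3 : (c₂ : ℤ) = n * a p - (c₁ : ℤ) * (p.val.2 * a p - b p * c₂) := by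
            linarith [hkey p]
          rw [h3]
          exact dvd_sub (hq2.mul_right _) (hq1.mul_left _)
        have hc₁y : (q : ℤ) ∣ (c₁ : ℤ) * p.val.2 := by
          have hs := p.2.2.2
          have h3 : (c₁ : ℤ) * p.val.2 = n - (c₂ : ℤ) * p.val.1 := by linarith
          rw [h3]
          exact dvd_sub hq2 (hqc₂.mul_right _)
        have hny : ¬ (q : ℤ) ∣ p.val.2 := by
          intro hyy
          obtain ⟨u, v, huv⟩ := p.2.2.1
          exact aux_prime_not_dvd_one q hq (huv ▸ dvd_add (hyy.mul_left u) (hqc₂.mul_left v))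
        have hya : (q : ℤ) ∣ p.val.2 * a p := by
          have h3 : p.val.2 * a p = (p.val.2 * a p - b p * c₂) + b p * c₂ := by ring
          rw [h3]
          exact dvd_add hq1 (hqc₂.mul_left _)
        have hqa : (q : ℤ) ∣ a p := (hpz.dvd_mul.mp hya).resolve_left hny
        have hqc₁ : (q : ℤ) ∣ (c₁ : ℤ) := (hpz.dvd_mul.mp hc₁y).resolve_right hny
        exact aux_prime_not_dvd_one q hq
          (hab p ▸ dvd_add (hqa.mul_right _) (hqc₁.mul_left (b p)))
      · exact ⟨a p, hdiveq p⟩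
      · intro d' hd'd hd'lt hcon
        have hd'0 : d' ≠ 0 := by
          rintro rfl
          exact hd0.ne' (Nat.eq_zero_of_zero_dvd hd'd)
        have htd : d' * (d / d') = d := Nat.mul_div_cancel' hd'd
        set t := d / d' with htdef
        have ht1 : 1 < t := by
          have h3 : d' * 1 < d' * t := by rw [mul_one, htd]; exact hd'lt
          exact lt_of_mul_lt_mul_left h3 (Nat.zero_le d')
        have hd'z : ((d' : ℕ) : ℤ) ≠ 0 := by exact_mod_cast hd'0
        have hc : ((d' : ℕ) : ℤ) * (t : ℤ) = (d : ℤ) := by exact_mod_cast htd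
        have hnd' : n / (d' : ℤ) = (n / d) * t := by
          have hdvd' : ((d' : ℕ) : ℤ) ∣ n := by
            refine dvd_trans ?_ hd
            exact_mod_cast hd'd
          have h1 : n / (d' : ℤ) * d' = n := Int.ediv_mul_cancel hdvd'
          have h2 : (n / (d : ℤ)) * (t : ℤ) * (d' : ℤ) = n := by
            calc (n / (d : ℤ)) * (t : ℤ) * (d' : ℤ)
                = (n / (d : ℤ)) * (((d' : ℕ) : ℤ) * (t : ℤ)) := by ring
            _ = (n / (d : ℤ)) * d := by rw [hc]
            _ = n := Int.ediv_mul_cancel hd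
          exact mul_right_cancel₀ hd'z (h1.trans h2.symm)
        rw [hnd', hdiveq p] at hcon
        have htap : (t : ℤ) ∣ a p := by
          obtain ⟨u, hu⟩ := hcon
          refine ⟨u, mul_left_cancel₀ hndz ?_⟩
          linear_combination hu
        have htc₁ : (t : ℤ) ∣ (c₁ : ℤ) := by
          have h3 : t ∣ c₁ := dvd_trans (Nat.div_dvd_of_dvd hd'd) hdc₁
          exact_mod_cast h3
        have hone : (t : ℤ) ∣ 1 :=
          hab p ▸ dvd_add (htap.mul_right _) (htc₁.mul_left (b p))
        have hone' : t ∣ 1 := by exact_mod_cast hone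
        have := Nat.dvd_one.mp hone'
        omega
    · rintro ⟨ρ, hρr, hcop, ⟨w, hw⟩, hmin⟩
      have hnw : (c₁ : ℤ) * ρ + c₂ = n * w := by
        linear_combination (d : ℤ) * hw - ρ * he₁ - he₂ + w * hnd
      have hwc₁ : IsCoprime w (c₁ : ℤ) := by
        apply aux_coprime
        intro q hq hqw hqc₁
        have hqc₂ : (q : ℤ) ∣ (c₂ : ℤ) := by
          have h3 : (c₂ : ℤ) = n * w - (c₁ : ℤ) * ρ := by linarith [hnw]
          rw [h3]
          exact dvd_sub (hqw.mul_left n) (hqc₁.mul_right ρ)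
        have hqd : q ∣ d := by
          rw [hdef]
          exact Nat.dvd_gcd (by exact_mod_cast hqc₁) (by exact_mod_cast hqc₂)
        apply hmin (d / q) (Nat.div_dvd_of_dvd hqd) (Nat.div_lt_self hd0 hq.one_lt)
        have hq0 : 0 < d / q := Nat.div_pos (Nat.le_of_dvd hd0 hqd) hq.pos
        have hqdz : ((d / q : ℕ) : ℤ) ≠ 0 := by exact_mod_cast hq0.ne'
        have hcast2 : ((d / q : ℕ) : ℤ) * (q : ℤ) = (d : ℤ) := by
          exact_mod_cast Nat.div_mul_cancel hqd
        have hnd2 : n / ((d / q : ℕ) : ℤ) = (n / d) * q := by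
          have hdvd' : ((d / q : ℕ) : ℤ) ∣ n := by
            refine dvd_trans ?_ hd
            exact_mod_cast Nat.div_dvd_of_dvd hqd
          have h1 : n / ((d / q : ℕ) : ℤ) * ((d / q : ℕ) : ℤ) = n := Int.ediv_mul_cancel hdvd'
          have h2 : (n / (d : ℤ)) * (q : ℤ) * ((d / q : ℕ) : ℤ) = n := by
            calc (n / (d : ℤ)) * (q : ℤ) * ((d / q : ℕ) : ℤ)
                = (n / (d : ℤ)) * (((d / q : ℕ) : ℤ) * (q : ℤ)) := by ring
            _ = (n / (d : ℤ)) * d := by rw [hcast2]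
            _ = n := Int.ediv_mul_cancel hd
          exact mul_right_cancel₀ hqdz (h1.trans h2.symm)
        rw [hnd2, hw]
        obtain ⟨w', hw'⟩ := hqw
        exact ⟨w', by rw [hw']; ring⟩
      obtain ⟨α, β, hαβ⟩ := hwc₁
      have hA : IsCoprime (α : ℤ) (c₁ : ℤ) := ⟨w, β, by linear_combination hαβ⟩
      have hC : (c₂ : ℤ) * α + (c₁ : ℤ) * (α * ρ + n * β) = n := by
        linear_combination α * hnw + n * hαβ
      have hB : IsCoprime (α * ρ + n * β) (c₂ : ℤ) := by
        apply aux_coprime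
        intro q hq hqy hqc₂
        have hqn : (q : ℤ) ∣ n := hC ▸ dvd_add (hqc₂.mul_right α) (hqy.mul_left _)
        have hρeq : ρ = (α * ρ + n * β) * w - β * c₂ := by
          linear_combination (-ρ) * hαβ + β * hnw
        have hqρ : (q : ℤ) ∣ ρ := by
          rw [hρeq]
          exact dvd_sub (hqy.mul_right w) (hqc₂.mul_left β)
        obtain ⟨u, v, huv⟩ := hcop
        exact aux_prime_not_dvd_one q hq (huv ▸ dvd_add (hqρ.mul_left u) (hqn.mul_left v))
      refine ⟨⟨(α, α * ρ + n * β), hA, hB, hC⟩, ?_⟩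
      rw [← hρr]
      have h1 : α * w ≡ 1 [ZMOD (c₁ : ℤ)] := by
        rw [Int.modEq_iff_dvd]
        exact ⟨β, by linear_combination - hαβ⟩
      have h2 : (c₁ : ℤ) * ρ = n * w - c₂ := by linarith [hnw]
      exact hspec ⟨(α, α * ρ + n * β), hA, hB, hC⟩ w ρ h1 h2
end

section
/- Let c₁, c₂, n be positive integers with d = gcd(c₁,c₂) dividing n, r an integer coprime to n such that (c₁/d)r + (c₂/d) ≡ 0 (mod n/d), and suppose gcd(c₁/d, n/d) = 1. Fix c₁ and let λ be a positive integer; define c₂/d = -(c₁/d)·r + λ·(n/d). Then the pair (c₁, c₂) satisfies: gcd(c₂/d, n/d) = 1, gcd(c₂/d, c₁/d) = 1, and (c₁r + c₂)/d ≢ 0 (mod n/d') for all proper divisors d' of d, if and only if gcd(λ, c₁) = 1. -/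
theorem stmt_7 (c₁ n d : ℕ) (hc₁ : 0 < c₁) (hn : 0 < n) (hd : 0 < d)
    (hdn : d ∣ n) (hdc₁ : d ∣ c₁)
    (r : ℤ) (hr : IsCoprime r (n : ℤ))
    (hcop : Nat.Coprime (c₁ / d) (n / d))
    (lam : ℕ) (hlam : 0 < lam)
    (c₂ : ℤ) (hc₂ : c₂ / (d : ℤ) = -(((c₁ / d : ℕ) : ℤ)) * r + (lam : ℤ) * ((n / d : ℕ) : ℤ))
    (hc₂d : (d : ℤ) ∣ c₂)
    (hcong : ((n / d : ℕ) : ℤ) ∣ ((c₁ / d : ℕ) : ℤ) * r + c₂ / (d : ℤ)) :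
    (IsCoprime (c₂ / (d : ℤ)) ((n / d : ℕ) : ℤ) ∧
     IsCoprime (c₂ / (d : ℤ)) ((c₁ / d : ℕ) : ℤ) ∧
     (∀ d' : ℕ, d' ∣ d → d' < d →
        ¬ (((n / d' : ℕ) : ℤ) ∣ ((c₁ : ℤ) * r + c₂) / (d : ℤ)))) ↔
    Nat.Coprime lam c₁ := by
  have hd0 : (d : ℤ) ≠ 0 := by exact_mod_cast hd.ne'
  set a : ℤ := ((c₁ / d : ℕ) : ℤ) with ha
  set m : ℤ := ((n / d : ℕ) : ℤ) with hm
  have hmpos : 0 < n / d := Nat.div_pos (Nat.le_of_dvd hn hdn) hd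
  have hm0 : m ≠ 0 := by rw [hm]; exact_mod_cast hmpos.ne'
  have hc₁eq : (c₁ : ℤ) = (d : ℤ) * a := by
    have : d * (c₁ / d) = c₁ := Nat.mul_div_cancel' hdc₁
    rw [ha]; exact_mod_cast this.symm
  have hsum : (c₁ : ℤ) * r + c₂ = (d : ℤ) * (a * r + c₂ / (d : ℤ)) := by
    rw [mul_add, ← mul_assoc, ← hc₁eq, Int.mul_ediv_cancel' hc₂d]
  have hquot : ((c₁ : ℤ) * r + c₂) / (d : ℤ) = (lam : ℤ) * m := by
    rw [hsum, Int.mul_ediv_cancel_left _ hd0, hc₂]; ring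
  have key : ∀ d' : ℕ, d' ∣ d → (n / d' : ℕ) = (n / d) * (d / d') := by
    intro d' hd'
    obtain ⟨k, hk⟩ := hd'
    obtain ⟨l, hl⟩ := hdn
    have hd'0 : 0 < d' := Nat.pos_of_dvd_of_pos ⟨k, hk⟩ hd
    have h1 : n / d' = k * l := by
      rw [hl, hk, mul_assoc, Nat.mul_div_cancel_left _ hd'0]
    have h2 : n / d = l := by rw [hl, Nat.mul_div_cancel_left _ hd]
    have h3 : d / d' = k := by rw [hk, Nat.mul_div_cancel_left _ hd'0]
    rw [h1, h2, h3, mul_comm]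
  have hma : IsCoprime a m := Nat.isCoprime_iff_coprime.mpr hcop
  have hrm : IsCoprime r m :=
    hr.of_isCoprime_of_dvd_right (by rw [hm]; exact_mod_cast Nat.div_dvd_of_dvd hdn)
  constructor
  · rintro ⟨h1, h2, h3⟩
    rw [hc₂] at h2
    have h4 : IsCoprime ((lam : ℤ) * m) a := by
      have h := h2.add_mul_right_left r
      rwa [show -a * r + (lam : ℤ) * m + r * a = (lam : ℤ) * m by ring] at h
    have hla : Nat.Coprime lam (c₁ / d) :=
      Nat.isCoprime_iff_coprime.mp h4.of_mul_left_left
    have hld : Nat.Coprime lam d := by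
      by_contra hco
      have hgd : Nat.gcd lam d ∣ d := Nat.gcd_dvd_right _ _
      have hgl : Nat.gcd lam d ∣ lam := Nat.gcd_dvd_left _ _
      have hgpos : 0 < Nat.gcd lam d := Nat.gcd_pos_of_pos_left _ hlam
      have hg2 : 1 < Nat.gcd lam d := by
        rcases Nat.lt_or_ge (Nat.gcd lam d) 2 with h | h
        · exfalso; exact hco (by omega)
        · omega
      have hdvd : d / Nat.gcd lam d ∣ d := Nat.div_dvd_of_dvd hgd
      have hlt : d / Nat.gcd lam d < d := Nat.div_lt_self hd hg2
      apply h3 _ hdvd hlt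
      rw [hquot, key _ hdvd, Nat.div_div_self hgd hd.ne']
      obtain ⟨t, ht⟩ := hgl
      refine ⟨(t : ℤ), ?_⟩
      have hlc : (lam : ℤ) = (Nat.gcd lam d : ℤ) * (t : ℤ) := by exact_mod_cast ht
      rw [hlc, Nat.cast_mul, ← hm]; ring
    have : Nat.Coprime lam ((c₁ / d) * d) := hla.mul_right hld
    rwa [Nat.div_mul_cancel hdc₁] at this
  · intro hco
    have hla : Nat.Coprime lam (c₁ / d) :=
      hco.coprime_dvd_right (Nat.div_dvd_of_dvd hdc₁)
    have hlaI : IsCoprime ((lam : ℤ)) a := Nat.isCoprime_iff_coprime.mpr hla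
    refine ⟨?_, ?_, ?_⟩
    · rw [hc₂, neg_mul]
      exact ((hma.mul_left hrm).neg_left).add_mul_right_left (lam : ℤ)
    · rw [hc₂, show -a * r + (lam : ℤ) * m = (lam : ℤ) * m + a * (-r) by ring]
      exact (hlaI.mul_left hma.symm).add_mul_left_left (-r)
    · intro d' hdvd hlt h
      rw [hquot, key d' hdvd] at h
      obtain ⟨k, hk⟩ := hdvd
      have hd'0 : 0 < d' := Nat.pos_of_dvd_of_pos ⟨k, hk⟩ hd
      have hkeq : d / d' = k := by rw [hk, Nat.mul_div_cancel_left _ hd'0]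
      have hk1 : 1 < k := by
        rcases Nat.lt_or_ge k 2 with h' | h'
        · interval_cases k <;> omega
        · omega
      rw [hkeq] at h
      have h' : m * (k : ℤ) ∣ m * (lam : ℤ) := by
        push_cast at h; rwa [mul_comm ((lam : ℤ)) m] at h
      have hkl : (k : ℤ) ∣ (lam : ℤ) := (mul_dvd_mul_iff_left hm0).mp h'
      have hklN : k ∣ lam := by exact_mod_cast hkl
      have hkc₁ : k ∣ c₁ := dvd_trans ⟨d', by rw [hk, mul_comm]⟩ hdc₁
      have : k ∣ 1 := hco ▸ Nat.dvd_gcd hklN hkc₁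
      rw [Nat.dvd_one] at this; omega
end

section
/- Define R(n,d) for d | n by R(n,d) = Z(d,1) · Π_{p|n} (1 + 1/p)^{-1}, where Z(d,s) = Σ_{d' = Π p^j : p | d, p ∤ (n/d)} φ(d'·d)/(d'·d)^{1+s} (the sum running over all positive integers d' whose prime factors divide d but not n/d). Then Σ_{d | n} R(n,d) = 1. -/
open Nat Finset ArithmeticFunction

/-- `Z(d,1) = Σ_{d'} φ(d'·d)/(d'·d)²`, where `d'` runs over positive integers all of whose
prime factors divide `d` but do not divide `n/d`. -/
noncomputable def Zconst (n d : ℕ) : ℝ :=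
  ∑' d' : {m : ℕ // 0 < m ∧ ∀ p : ℕ, p.Prime → p ∣ m → (p ∣ d ∧ ¬ p ∣ n / d)},
    (Nat.totient ((d' : ℕ) * d) : ℝ) / (((d' : ℕ) * d : ℕ) : ℝ) ^ 2

/-- `R(n,d) = Z(d,1) · Π_{p|n} (1 + 1/p)⁻¹`. -/
noncomputable def Rconst (n d : ℕ) : ℝ :=
  Zconst n d * ∏ p ∈ n.primeFactors, (1 + 1 / (p : ℝ))⁻¹


lemma totient_mul_self (m : ℕ) : ∀ d : ℕ, (∀ p : ℕ, p.Prime → p ∣ m → p ∣ d) →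
    Nat.totient (m * d) = m * Nat.totient d := by
  induction m using Nat.strong_induction_on with
  | _ m ih =>
    intro d hd
    match m, ih, hd with
    | 0, _, _ => simp
    | 1, _, _ => simp
    | (k+2), ih, hd =>
      have hm2 : 2 ≤ k + 2 := by omega
      have hpp : (k+2).minFac.Prime := Nat.minFac_prime (by omega)
      have hpm : (k+2).minFac ∣ (k+2) := Nat.minFac_dvd _
      have hpd : (k+2).minFac ∣ d := hd _ hpp hpm
      obtain ⟨m', hm'⟩ := hpm
      have hm'0 : m' ≠ 0 := by rintro rfl; simp at hm'
      have hlt : m' < k + 2 := by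
        rw [hm']
        nlinarith [hpp.two_le, Nat.pos_of_ne_zero hm'0]
      have h1 : (k+2) * d = (k+2).minFac * (m' * d) := by conv_lhs => rw [hm', mul_assoc]
      rw [h1, Nat.totient_mul_of_prime_of_dvd hpp (hpd.trans (dvd_mul_left d m')),
        ih m' hlt d (fun q hq hqm => hd q hq (hm' ▸ hqm.mul_left _))]
      conv_rhs => rw [hm']
      ring



lemma tsum_inv_pow_prime {p : ℕ} (hp : p.Prime) :
    ∑' j : ℕ, ((p ^ j : ℕ) : ℝ)⁻¹ = (1 - (p : ℝ)⁻¹)⁻¹ := by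
  have h1 : (p : ℝ)⁻¹ < 1 := by
    rw [inv_lt_one_iff₀]; right; exact_mod_cast hp.one_lt
  have h0 : (0:ℝ) ≤ (p : ℝ)⁻¹ := by positivity
  rw [← tsum_geometric_of_lt_one h0 h1]
  apply tsum_congr; intro j; push_cast; rw [← inv_pow]

lemma inv_hasSum_factored (s : Finset ℕ) (hs : ∀ p ∈ s, p.Prime) :
    HasSum (fun m : Nat.factoredNumbers s => ((m : ℕ) : ℝ)⁻¹)
      (∏ p ∈ s, (1 - (p : ℝ)⁻¹)⁻¹) := by
  have key := EulerProduct.summable_and_hasSum_factoredNumbers_prod_filter_prime_tsum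
    (f := fun m : ℕ => ((m : ℕ) : ℝ)⁻¹) (by norm_num)
    (fun {a b} _ => by push_cast; rw [mul_inv]) ?_ s
  · have h2 := key.2
    rw [Finset.filter_true_of_mem hs] at h2
    rwa [Finset.prod_congr rfl (fun p hp => tsum_inv_pow_prime (hs p hp))] at h2
  · intro p hp
    have h1 : (p : ℝ)⁻¹ < 1 := by
      rw [inv_lt_one_iff₀]; right; exact_mod_cast hp.one_lt
    have h0 : (0:ℝ) ≤ (p : ℝ)⁻¹ := by positivity
    apply Summable.congr (summable_geometric_of_lt_one h0 h1)
    intro j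
    rw [Real.norm_eq_abs, abs_of_nonneg (by positivity)]
    push_cast
    rw [← inv_pow]


lemma Zconst_eq (n d : ℕ) (hd : 0 < d) :
    Zconst n d = (Nat.totient d : ℝ) / (d : ℝ) ^ 2 *
      ∏ p ∈ d.primeFactors.filter (fun p => ¬ p ∣ n / d), (1 - (p : ℝ)⁻¹)⁻¹ := by
  set s := d.primeFactors.filter (fun p => ¬ p ∣ n / d) with hs
  have hsp : ∀ p ∈ s, p.Prime := fun p hp =>
    Nat.prime_of_mem_primeFactors (Finset.mem_filter.mp hp).1
  have hequiv : ∀ m : ℕ,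
      (0 < m ∧ ∀ p : ℕ, p.Prime → p ∣ m → (p ∣ d ∧ ¬ p ∣ n / d)) ↔
        m ∈ Nat.factoredNumbers s := by
    intro m
    constructor
    · rintro ⟨hm, h⟩
      refine Nat.mem_factoredNumbers'.mpr fun p hp hpm => ?_
      obtain ⟨h1, h2⟩ := h p hp hpm
      exact Finset.mem_filter.mpr ⟨Nat.mem_primeFactors.mpr ⟨hp, h1, hd.ne'⟩, h2⟩
    · intro h
      refine ⟨Nat.pos_of_ne_zero (Nat.ne_zero_of_mem_factoredNumbers h),
        fun p hp hpm => ?_⟩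
      obtain ⟨h1, h2⟩ := Finset.mem_filter.mp (Nat.mem_factoredNumbers'.mp h p hp hpm)
      exact ⟨Nat.dvd_of_mem_primeFactors h1, h2⟩
  have step1 : Zconst n d = ∑' m : Nat.factoredNumbers s,
      (Nat.totient ((m : ℕ) * d) : ℝ) / (((m : ℕ) * d : ℕ) : ℝ) ^ 2 := by
    rw [Zconst]
    exact Equiv.tsum_eq (Equiv.subtypeEquivRight hequiv)
      (fun m : Nat.factoredNumbers s =>
        (Nat.totient ((m : ℕ) * d) : ℝ) / (((m : ℕ) * d : ℕ) : ℝ) ^ 2)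
  have hc : ∀ m : Nat.factoredNumbers s,
      (Nat.totient ((m : ℕ) * d) : ℝ) / (((m : ℕ) * d : ℕ) : ℝ) ^ 2
        = ((m : ℕ) : ℝ)⁻¹ * ((Nat.totient d : ℝ) / (d : ℝ) ^ 2) := by
    rintro ⟨m, hm⟩
    have hm0 : m ≠ 0 := Nat.ne_zero_of_mem_factoredNumbers hm
    have ht := totient_mul_self m d (fun p hp hpm =>
      Nat.dvd_of_mem_primeFactors
        (Finset.mem_filter.mp ((Nat.mem_factoredNumbers'.mp hm) p hp hpm)).1)
    push_cast [ht]
    field_simp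
  rw [step1, tsum_congr hc,
    ((inv_hasSum_factored s hsp).mul_right ((Nat.totient d : ℝ) / (d : ℝ) ^ 2)).tsum_eq,
    mul_comm]


noncomputable def gfun (n : ℕ) : ℕ → ℝ := fun d =>
  (Nat.totient d : ℝ) / (d : ℝ) ^ 2 *
    ∏ p ∈ d.primeFactors.filter (fun p => n.factorization p ≤ d.factorization p),
      (1 - (p : ℝ)⁻¹)⁻¹

lemma gfun_zero (n : ℕ) : gfun n 0 = 0 := by simp [gfun]

lemma gfun_one (n : ℕ) : gfun n 1 = 1 := by simp [gfun]

lemma gfun_mult (n : ℕ) {m k : ℕ} (hm : m ≠ 0) (hk : k ≠ 0) (hmk : m.Coprime k) :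
    gfun n (m * k) = gfun n m * gfun n k := by
  have hdvd : ∀ {a b : ℕ}, a.Coprime b → ∀ p ∈ a.primeFactors, b.factorization p = 0 := by
    intro a b hab p hp
    refine Nat.factorization_eq_zero_of_not_dvd fun hpb => ?_
    have hpa := Nat.dvd_of_mem_primeFactors hp
    have hprime := Nat.prime_of_mem_primeFactors hp
    exact hprime.one_lt.ne' (Nat.eq_one_of_dvd_coprimes hab hpa hpb)
  have hfact : ∀ p, (m * k).factorization p = m.factorization p + k.factorization p := by
    intro p
    rw [Nat.factorization_mul hm hk]; rfl
  have hf1 : m.primeFactors.filter (fun p => n.factorization p ≤ (m * k).factorization p)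
      = m.primeFactors.filter (fun p => n.factorization p ≤ m.factorization p) := by
    apply Finset.filter_congr
    intro p hp
    rw [hfact p, hdvd hmk p hp]; omega
  have hf2 : k.primeFactors.filter (fun p => n.factorization p ≤ (m * k).factorization p)
      = k.primeFactors.filter (fun p => n.factorization p ≤ k.factorization p) := by
    apply Finset.filter_congr
    intro p hp
    rw [hfact p, hdvd hmk.symm p hp]; omega
  have hdisj : Disjoint
      (m.primeFactors.filter (fun p => n.factorization p ≤ (m * k).factorization p))
      (k.primeFactors.filter (fun p => n.factorization p ≤ (m * k).factorization p)) :=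
    (Nat.Coprime.disjoint_primeFactors hmk).mono (Finset.filter_subset _ _)
      (Finset.filter_subset _ _)
  simp only [gfun]
  rw [Nat.totient_mul hmk, Nat.primeFactors_mul hm hk, Finset.filter_union,
    Finset.prod_union hdisj, hf1, hf2]
  push_cast
  ring

lemma primepow_sum {p : ℕ} (hp : p.Prime) (k : ℕ) (hk : 1 ≤ k) :
    ∑ a ∈ Finset.range (k + 1), ((Nat.totient (p ^ a) : ℝ) / ((p ^ a : ℕ) : ℝ) ^ 2 *
      if k ≤ a then (1 - (p : ℝ)⁻¹)⁻¹ else 1) = 1 + (p : ℝ)⁻¹ := by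
  have hp0 : (p : ℝ) ≠ 0 := by exact_mod_cast hp.pos.ne'
  have hp1 : (1 : ℝ) < (p : ℝ) := by exact_mod_cast hp.one_lt
  have hc : (1 : ℝ) - (p : ℝ)⁻¹ ≠ 0 := by
    have : (p : ℝ)⁻¹ < 1 := by rw [inv_lt_one_iff₀]; right; exact hp1
    linarith
  induction k with
  | zero => omega
  | succ k ih =>
    rcases Nat.eq_or_lt_of_le hk with h1 | h2
    · -- k + 1 = 1
      have : k = 0 := by omega
      subst this
      simp only [Finset.sum_range_succ, Finset.range_one, Finset.sum_singleton]
      norm_num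
      rw [Nat.totient_prime hp]
      have : ((p - 1 : ℕ) : ℝ) = (p : ℝ) - 1 := by
        exact_mod_cast Nat.cast_sub hp.one_le
      rw [this]
      have hpm1 : (p : ℝ) - 1 ≠ 0 := by linarith
      rw [show (1 : ℝ) - (p : ℝ)⁻¹ = ((p : ℝ) - 1) / (p : ℝ) by field_simp, inv_div]
      field_simp
    · have hk1 : 1 ≤ k := by omega
      obtain ⟨j, rfl⟩ : ∃ j, k = j + 1 := ⟨k - 1, by omega⟩
      have ihk := ih hk1
      rw [Finset.sum_range_succ] at ihk
      rw [Finset.sum_range_succ, Finset.sum_range_succ]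
      have he : ∑ x ∈ Finset.range (j + 1),
            ((Nat.totient (p ^ x) : ℝ) / ((p ^ x : ℕ) : ℝ) ^ 2 *
              if j + 1 + 1 ≤ x then (1 - (p : ℝ)⁻¹)⁻¹ else 1)
          = ∑ x ∈ Finset.range (j + 1),
            ((Nat.totient (p ^ x) : ℝ) / ((p ^ x : ℕ) : ℝ) ^ 2 *
              if j + 1 ≤ x then (1 - (p : ℝ)⁻¹)⁻¹ else 1) := by
        refine Finset.sum_congr rfl fun x hx => ?_
        rw [Finset.mem_range] at hx
        rw [if_neg (by omega), if_neg (by omega)]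
      rw [he, if_neg (by omega), if_pos (by omega)]
      rw [if_pos (by omega)] at ihk
      have hpm1 : (p : ℝ) - 1 ≠ 0 := by linarith
      have key : (Nat.totient (p ^ (j + 1)) : ℝ) / ((p ^ (j + 1) : ℕ) : ℝ) ^ 2 * 1 +
          (Nat.totient (p ^ (j + 1 + 1)) : ℝ) / ((p ^ (j + 1 + 1) : ℕ) : ℝ) ^ 2 *
            (1 - (p : ℝ)⁻¹)⁻¹
          = (Nat.totient (p ^ (j + 1)) : ℝ) / ((p ^ (j + 1) : ℕ) : ℝ) ^ 2 *
            (1 - (p : ℝ)⁻¹)⁻¹ := by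
        rw [Nat.totient_prime_pow hp j.succ_pos, Nat.totient_prime_pow hp (j + 1).succ_pos]
        simp only [Nat.succ_sub_one]
        rw [show (1 : ℝ) - (p : ℝ)⁻¹ = ((p : ℝ) - 1) / (p : ℝ) by field_simp, inv_div]
        push_cast [Nat.cast_sub hp.one_le]
        field_simp
        ring
      linarith [ihk, key]

lemma gfun_prime_pow {n p : ℕ} (hp : p.Prime) (hk : 1 ≤ n.factorization p) (a : ℕ) :
    gfun n (p ^ a) = (Nat.totient (p ^ a) : ℝ) / ((p ^ a : ℕ) : ℝ) ^ 2 *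
      if n.factorization p ≤ a then (1 - (p : ℝ)⁻¹)⁻¹ else 1 := by
  rcases Nat.eq_zero_or_pos a with rfl | ha
  · rw [if_neg (by omega)]
    simp [gfun]
  · unfold gfun
    congr 1
    rw [Nat.primeFactors_prime_pow ha.ne' hp, hp.factorization_pow]
    rw [Finset.filter_singleton]
    simp only [Finsupp.single_eq_same]
    split_ifs with h
    · simp
    · simp

lemma sum_gfun (n : ℕ) (hn : n ≠ 0) :
    ∑ d ∈ n.divisors, gfun n d = ∏ p ∈ n.primeFactors, (1 + (p : ℝ)⁻¹) := by
  set G : ArithmeticFunction ℝ := ⟨gfun n, gfun_zero n⟩ with hG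
  have hGm : G.IsMultiplicative := by
    rw [ArithmeticFunction.IsMultiplicative.iff_ne_zero]
    exact ⟨gfun_one n, fun {m k} hm hk hmk => gfun_mult n hm hk hmk⟩
  have h1 : ∑ d ∈ n.divisors, gfun n d = (↑ArithmeticFunction.zeta * G) n := by
    rw [ArithmeticFunction.coe_zeta_mul_apply]; rfl
  rw [h1, (ArithmeticFunction.isMultiplicative_zeta.natCast.mul hGm).multiplicative_factorization
    _ hn, Nat.prod_factorization_eq_prod_primeFactors]
  refine Finset.prod_congr rfl fun p hp => ?_
  have hpp : p.Prime := Nat.prime_of_mem_primeFactors hp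
  have hk : 1 ≤ n.factorization p := by
    rw [← Nat.Prime.dvd_iff_one_le_factorization hpp hn]
    exact Nat.dvd_of_mem_primeFactors hp
  rw [ArithmeticFunction.coe_zeta_mul_apply]
  rw [Nat.sum_divisors_prime_pow hpp]
  have : ∀ a : ℕ, G (p ^ a) = gfun n (p ^ a) := fun a => rfl
  rw [Finset.sum_congr rfl fun a _ => (this a).trans (gfun_prime_pow hpp hk a)]
  exact primepow_sum hpp _ hk


lemma Zconst_eq_gfun {n d : ℕ} (hd : d ∈ n.divisors) : Zconst n d = gfun n d := by
  obtain ⟨hdvd, hn⟩ := Nat.mem_divisors.mp hd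
  have hd0 : 0 < d := Nat.pos_of_mem_divisors hd
  have hnd : n / d ≠ 0 := (Nat.div_pos (Nat.le_of_dvd (Nat.pos_of_ne_zero hn) hdvd) hd0).ne'
  rw [Zconst_eq n d hd0]
  unfold gfun
  congr 1
  apply Finset.prod_congr _ (fun _ _ => rfl)
  apply Finset.filter_congr
  intro p hp
  have hpp : p.Prime := Nat.prime_of_mem_primeFactors hp
  have hfac : n.factorization p = d.factorization p + (n / d).factorization p := by
    conv_lhs => rw [← Nat.mul_div_cancel' hdvd]
    rw [Nat.factorization_mul hd0.ne' hnd]; rfl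
  have hdp : p ∣ n / d ↔ 1 ≤ (n / d).factorization p :=
    hpp.dvd_iff_one_le_factorization hnd
  simp only [hdp, hfac]
  omega

theorem stmt_13 (n : ℕ) (hn : 0 < n) :
    ∑ d ∈ n.divisors, Rconst n d = 1 := by
  unfold Rconst
  rw [← Finset.sum_mul]
  rw [Finset.sum_congr rfl (fun d hd => Zconst_eq_gfun hd), sum_gfun n hn.ne']
  rw [← Finset.prod_mul_distrib]
  apply Finset.prod_eq_one
  intro p hp
  have hp0 : (0:ℝ) < 1 + (p:ℝ)⁻¹ := by positivity
  rw [one_div]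
  exact mul_inv_cancel₀ hp0.ne'
end
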